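/- arXiv:2008.08425 — 2 statements merged into one kernel-verified Lean document; each statement's English description precedes it below -/
import Mathlib

section
/- Let a, D, λ, μ > 0, and set α := 4πλDa + μ and β := 4a²λ√(πD/α). Define f(s) := (4πλDa + 4a²λ√(πD/s)) · exp(−4πλDas − 8a²λ√(πDs)) for s > 0. Then for every t > 0, ∫₀^t f(s) e^{−μs} ds = (1 − μ/α)(1 − exp(−2β√(αt) − αt)) + (√π β μ/α) e^{β²} (erf(β + √(αt)) − erf(β)). -/
/-- The error function `erf x = (2/√π) ∫₀ˣ e^{-u²} du`. -/
noncomputable def erf (x : ℝ) : ℝ :=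
  (2 / Real.sqrt Real.pi) * ∫ u in (0:ℝ)..x, Real.exp (-u ^ 2)

/-- The hitting rate
`f(s) = (4πλDa + 4a²λ√(πD/s)) · exp(−4πλDas − 8a²λ√(πDs))`. -/
noncomputable def hitRate (a D lam s : ℝ) : ℝ :=
  (4 * Real.pi * lam * D * a + 4 * a ^ 2 * lam * Real.sqrt (Real.pi * D / s)) *
    Real.exp (-(4 * Real.pi * lam * D * a * s)
      - 8 * a ^ 2 * lam * Real.sqrt (Real.pi * D * s))

lemma erf_hasDerivAt (x : ℝ) :
    HasDerivAt erf (2 / Real.sqrt Real.pi * Real.exp (-x ^ 2)) x := by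
  have hc : Continuous fun u : ℝ => Real.exp (-u ^ 2) := by continuity
  have h := (hc.integral_hasStrictDerivAt 0 x).hasDerivAt
  exact h.const_mul (2 / Real.sqrt Real.pi)

@[continuity, fun_prop]
lemma erf_continuous : Continuous erf :=
  continuous_iff_continuousAt.2 fun x => (erf_hasDerivAt x).continuousAt

/-- Theorem 2: for `α = 4πλDa + μ` and `β = 4a²λ√(πD/α)`, the hitting probability of a
degradable molecule within time `t` is
`∫₀ᵗ f(s) e^{−μs} ds
  = (1 − μ/α)(1 − exp(−2β√(αt) − αt)) + (√π β μ/α) e^{β²}(erf(β + √(αt)) − erf(β))`. -/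
theorem degradable_hitting_probability (a D lam mu : ℝ) (ha : 0 < a) (hD : 0 < D)
    (hlam : 0 < lam) (hmu : 0 < mu) (α β : ℝ)
    (hα : α = 4 * Real.pi * lam * D * a + mu)
    (hβ : β = 4 * a ^ 2 * lam * Real.sqrt (Real.pi * D / α))
    (t : ℝ) (ht : 0 < t) :
    (∫ s in (0:ℝ)..t, hitRate a D lam s * Real.exp (-mu * s)) =
    (1 - mu / α) * (1 - Real.exp (-(2 * β * Real.sqrt (α * t)) - α * t))
      + (Real.sqrt Real.pi * β * mu / α) * Real.exp (β ^ 2) *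
          (erf (β + Real.sqrt (α * t)) - erf β) := by
  have hπ := Real.pi_pos
  have hαpos : 0 < α := by rw [hα]; positivity
  set G : ℝ → ℝ := fun s =>
    (1 - mu / α) * (1 - Real.exp (-(2 * β * Real.sqrt (α * s)) - α * s))
      + (Real.sqrt Real.pi * β * mu / α) * Real.exp (β ^ 2) *
          (erf (β + Real.sqrt (α * s)) - erf β) with hG
  have hcont : ContinuousOn G (Set.Icc 0 t) := by
    apply Continuous.continuousOn
    fun_prop
  have hderiv : ∀ s ∈ Set.Ioo (0:ℝ) t,
      HasDerivWithinAt G (hitRate a D lam s * Real.exp (-mu * s)) (Set.Ioi s) s := by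
    intro s hs
    obtain ⟨hs0, hst⟩ := hs
    have hαs : 0 < α * s := by positivity
    have h1 : HasDerivAt (fun s : ℝ => α * s) α s := by
      simpa using (hasDerivAt_id s).const_mul α
    have hsq : HasDerivAt (fun s : ℝ => Real.sqrt (α * s))
        (1 / (2 * Real.sqrt (α * s)) * α) s :=
      (Real.hasDerivAt_sqrt hαs.ne').comp s h1
    have h2 : HasDerivAt (fun s : ℝ => -(2 * β * Real.sqrt (α * s)) - α * s)
        (-(2 * β * (1 / (2 * Real.sqrt (α * s)) * α)) - α) s :=
      ((hsq.const_mul (2 * β)).neg.sub h1)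
    have h3 := h2.exp
    have hterm1 := ((hasDerivAt_const s (1:ℝ)).sub h3).const_mul (1 - mu / α)
    have h4 : HasDerivAt (fun s : ℝ => β + Real.sqrt (α * s))
        (1 / (2 * Real.sqrt (α * s)) * α) s := by
      exact hsq.const_add β
    have h5 := (erf_hasDerivAt (β + Real.sqrt (α * s))).comp s h4
    have hterm2 := (h5.sub_const (erf β)).const_mul
      ((Real.sqrt Real.pi * β * mu / α) * Real.exp (β ^ 2))
    have hGd := hterm1.add hterm2
    have key : (1 - mu / α) * (0 - Real.exp (-(2 * β * Real.sqrt (α * s)) - α * s) *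
          (-(2 * β * (1 / (2 * Real.sqrt (α * s)) * α)) - α))
        + (Real.sqrt Real.pi * β * mu / α) * Real.exp (β ^ 2) *
          (2 / Real.sqrt Real.pi * Real.exp (-(β + Real.sqrt (α * s)) ^ 2) *
            (1 / (2 * Real.sqrt (α * s)) * α))
        = hitRate a D lam s * Real.exp (-mu * s) := by
      have hq0 : 0 < Real.sqrt s := Real.sqrt_pos.2 hs0
      have hsa0 : 0 < Real.sqrt α := Real.sqrt_pos.2 hαpos
      have hsp0 : 0 < Real.sqrt (Real.pi * D) := Real.sqrt_pos.2 (by positivity)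
      have hsa2 : Real.sqrt α ^ 2 = α := Real.sq_sqrt hαpos.le
      have hq2 : Real.sqrt s ^ 2 = s := Real.sq_sqrt hs0.le
      have e1 : Real.sqrt (α * s) = Real.sqrt α * Real.sqrt s := Real.sqrt_mul hαpos.le s
      have e2 : Real.sqrt (Real.pi * D * s) = Real.sqrt (Real.pi * D) * Real.sqrt s :=
        Real.sqrt_mul (by positivity) s
      have e3 : Real.sqrt (Real.pi * D / s) = Real.sqrt (Real.pi * D) / Real.sqrt s :=
        Real.sqrt_div (by positivity) s
      have hβ' : β = 4 * a ^ 2 * lam * Real.sqrt (Real.pi * D) / Real.sqrt α := by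
        rw [hβ, Real.sqrt_div (by positivity : (0:ℝ) ≤ Real.pi * D)]; ring
      have hβs : β * Real.sqrt α = 4 * a ^ 2 * lam * Real.sqrt (Real.pi * D) := by
        rw [hβ']; field_simp
      have hE : Real.exp (-(2 * β * (Real.sqrt α * Real.sqrt s)) - α * s)
          = Real.exp (-(4 * Real.pi * lam * D * a * s)
              - 8 * a ^ 2 * lam * (Real.sqrt (Real.pi * D) * Real.sqrt s)) *
            Real.exp (-mu * s) := by
        rw [← Real.exp_add]
        congr 1
        linear_combination (-2 * Real.sqrt s) * hβs - s * hα
      have hE3 : Real.exp (-(β + Real.sqrt α * Real.sqrt s) ^ 2)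
          = Real.exp (-(4 * Real.pi * lam * D * a * s)
              - 8 * a ^ 2 * lam * (Real.sqrt (Real.pi * D) * Real.sqrt s)) *
            Real.exp (-mu * s) / Real.exp (β ^ 2) := by
        rw [eq_div_iff (Real.exp_ne_zero _), ← Real.exp_add, ← Real.exp_add]
        congr 1
        linear_combination (-2 * Real.sqrt s) * hβs + (-(Real.sqrt s ^ 2)) * hsa2
          + (-α) * hq2 - s * hα
      rw [hitRate, e1, e2, e3, hE, hE3, hβ', show mu = α - 4 * Real.pi * lam * D * a by
        rw [hα]; ring]
      generalize Real.sqrt α = sa at hsa0 hsa2 ⊢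
      rw [← hsa2]
      have h2 : sa ≠ 0 := hsa0.ne'
      have h3 : Real.sqrt s ≠ 0 := hq0.ne'
      have h4 : Real.sqrt Real.pi ≠ 0 := (Real.sqrt_pos.2 hπ).ne'
      field_simp
      ring
    rw [← key]
    exact (hGd.congr_deriv (by ring)).hasDerivWithinAt
  have hint : IntervalIntegrable (fun s => hitRate a D lam s * Real.exp (-mu * s))
      MeasureTheory.volume 0 t := by
    have hmeas : Measurable fun s => hitRate a D lam s * Real.exp (-mu * s) := by
      have m1 : Measurable fun s : ℝ => Real.sqrt (Real.pi * D / s) :=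
        Real.continuous_sqrt.measurable.comp (measurable_const.div measurable_id)
      have m2 : Measurable fun s : ℝ => Real.sqrt (Real.pi * D * s) :=
        Real.continuous_sqrt.measurable.comp (measurable_id.const_mul (Real.pi * D))
      have m3 : Measurable fun s : ℝ =>
          Real.exp (-(4 * Real.pi * lam * D * a * s)
            - 8 * a ^ 2 * lam * Real.sqrt (Real.pi * D * s)) :=
        Real.measurable_exp.comp
          (((measurable_id.const_mul (4 * Real.pi * lam * D * a)).neg).sub
            (m2.const_mul (8 * a ^ 2 * lam)))
      have m4 : Measurable fun s : ℝ => Real.exp (-mu * s) :=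
        Real.measurable_exp.comp (measurable_id.const_mul (-mu))
      exact ((measurable_const.add (m1.const_mul (4 * a ^ 2 * lam))).mul m3).mul m4
    have hmaj : IntervalIntegrable (fun s : ℝ => 4 * Real.pi * lam * D * a
        + 4 * a ^ 2 * lam * Real.sqrt (Real.pi * D) * s ^ (-(1/2) : ℝ))
        MeasureTheory.volume 0 t :=
      intervalIntegrable_const.add ((intervalIntegral.intervalIntegrable_rpow' (by norm_num)).const_mul _)
    apply hmaj.mono_fun (hmeas.aestronglyMeasurable)
    rw [Set.uIoc_of_le ht.le]
    filter_upwards [MeasureTheory.ae_restrict_mem measurableSet_Ioc] with s hs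
    obtain ⟨hs0, hst⟩ := hs
    have hnn1 : (0:ℝ) ≤ 4 * Real.pi * lam * D * a := by positivity
    have hnn2 : (0:ℝ) ≤ 4 * a ^ 2 * lam * Real.sqrt (Real.pi * D / s) := by positivity
    have he1 : Real.exp (-(4 * Real.pi * lam * D * a * s)
        - 8 * a ^ 2 * lam * Real.sqrt (Real.pi * D * s)) ≤ 1 := by
      rw [Real.exp_le_one_iff]
      have h1 : (0:ℝ) ≤ 4 * Real.pi * lam * D * a * s := by positivity
      have h2 : (0:ℝ) ≤ 8 * a ^ 2 * lam * Real.sqrt (Real.pi * D * s) := by positivity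
      linarith
    have he2 : Real.exp (-mu * s) ≤ 1 := by
      rw [Real.exp_le_one_iff]
      have : (0:ℝ) ≤ mu * s := by positivity
      linarith
    have hrw : Real.sqrt (Real.pi * D / s) = Real.sqrt (Real.pi * D) * s ^ (-(1/2) : ℝ) := by
      rw [Real.sqrt_div (by positivity) s, div_eq_mul_inv, Real.sqrt_eq_rpow s,
        ← Real.rpow_neg hs0.le]
    have hmajnn : (0:ℝ) ≤ 4 * Real.pi * lam * D * a
        + 4 * a ^ 2 * lam * Real.sqrt (Real.pi * D) * s ^ (-(1/2) : ℝ) := by positivity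
    rw [Real.norm_eq_abs, Real.norm_eq_abs, abs_of_nonneg hmajnn, hitRate,
      abs_of_nonneg (by positivity)]
    calc (4 * Real.pi * lam * D * a + 4 * a ^ 2 * lam * Real.sqrt (Real.pi * D / s)) *
          Real.exp (-(4 * Real.pi * lam * D * a * s)
            - 8 * a ^ 2 * lam * Real.sqrt (Real.pi * D * s)) * Real.exp (-mu * s)
        ≤ (4 * Real.pi * lam * D * a + 4 * a ^ 2 * lam * Real.sqrt (Real.pi * D / s)) * 1 * 1 := by
          apply mul_le_mul (mul_le_mul le_rfl he1 (Real.exp_pos _).le (by linarith)) he2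
            (Real.exp_pos _).le (by positivity)
      _ = 4 * Real.pi * lam * D * a + 4 * a ^ 2 * lam * Real.sqrt (Real.pi * D / s) := by ring
      _ = 4 * Real.pi * lam * D * a
          + 4 * a ^ 2 * lam * Real.sqrt (Real.pi * D) * s ^ (-(1/2) : ℝ) := by
          rw [hrw]; ring
  have := intervalIntegral.integral_eq_sub_of_hasDeriv_right_of_le ht.le hcont hderiv hint
  rw [this]
  have hG0 : G 0 = 0 := by simp [hG]
  rw [hG0, sub_zero]
end

section
/- For every β > 0, it holds that 0 < √π · β · e^{β²} · erfc(β) < 1. Consequently, for a, D, λ, μ > 0 with α := 4πλDa + μ and β := 4a²λ√(πD/α), the quantity p_∞ := 1 − μ/α + √π β (μ/α) e^{β²} erfc(β) satisfies 0 < p_∞ < 1. -/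
open MeasureTheory Real Set Filter Topology

/-- The complementary error function. -/
noncomputable def erfc (x : ℝ) : ℝ := 1 - erf x

private lemma gauss_integrable : Integrable (fun x : ℝ => Real.exp (-x ^ 2)) := by
  simpa [neg_mul] using integrable_exp_neg_mul_sq (one_pos)

private lemma mul_gauss_integrable : Integrable (fun x : ℝ => x * Real.exp (-x ^ 2)) := by
  simpa [neg_mul] using integrable_mul_exp_neg_mul_sq (one_pos)

private lemma gauss_Ioi_zero : ∫ x in Ioi (0:ℝ), Real.exp (-x ^ 2) = Real.sqrt Real.pi / 2 := by
  simpa [neg_mul] using integral_gaussian_Ioi 1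

private lemma hasDerivAt_aux (x : ℝ) :
    HasDerivAt (fun y : ℝ => -Real.exp (-y ^ 2) / 2) (x * Real.exp (-x ^ 2)) x := by
  have h1 : HasDerivAt (fun y : ℝ => -y ^ 2) (-(2 * x)) x := by
    exact (hasDerivAt_pow 2 x).neg.congr_deriv (by norm_num)
  have h2 := (h1.exp.neg.div_const 2)
  exact h2.congr_deriv (by ring)

private lemma mul_gauss_Ioi (β : ℝ) :
    ∫ x in Ioi β, x * Real.exp (-x ^ 2) = Real.exp (-β ^ 2) / 2 := by
  have htend : Tendsto (fun y : ℝ => -Real.exp (-y ^ 2) / 2) atTop (𝓝 0) := by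
    have h1 : Tendsto (fun y : ℝ => -y ^ 2) atTop atBot :=
      Filter.tendsto_neg_atTop_atBot.comp (tendsto_pow_atTop two_ne_zero)
    have h2 : Tendsto (fun y : ℝ => Real.exp (-y ^ 2)) atTop (𝓝 0) :=
      Real.tendsto_exp_atBot.comp h1
    have := (h2.neg.div_const 2)
    simpa using this
  have := integral_Ioi_of_hasDerivAt_of_tendsto' (a := β) (f := fun y : ℝ => -Real.exp (-y ^ 2) / 2)
    (fun x _ => hasDerivAt_aux x) mul_gauss_integrable.integrableOn htend
  rw [this]
  ring

private lemma gauss_Ioi_pos (β : ℝ) : 0 < ∫ x in Ioi β, Real.exp (-x ^ 2) := by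
  rw [setIntegral_pos_iff_support_of_nonneg_ae
    (Filter.Eventually.of_forall fun x => (Real.exp_pos _).le) gauss_integrable.integrableOn]
  have hsub : Ioi β ⊆ Function.support (fun x : ℝ => Real.exp (-x ^ 2)) ∩ Ioi β :=
    fun x hx => ⟨(Real.exp_pos _).ne', hx⟩
  calc (0 : ENNReal) < volume (Ioi β) := by simp [Real.volume_Ioi]
    _ ≤ _ := measure_mono hsub

private lemma gauss_Ioi_lt (β : ℝ) (hβ : 0 < β) :
    ∫ x in Ioi β, Real.exp (-x ^ 2) < Real.exp (-β ^ 2) / (2 * β) := by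
  have hint : IntegrableOn (fun x : ℝ => 1 / β * (x * Real.exp (-x ^ 2)) - Real.exp (-x ^ 2))
      (Ioi β) := ((mul_gauss_integrable.const_mul (1 / β)).sub gauss_integrable).integrableOn
  have hpos : 0 < ∫ x in Ioi β, (1 / β * (x * Real.exp (-x ^ 2)) - Real.exp (-x ^ 2)) := by
    rw [setIntegral_pos_iff_support_of_nonneg_ae ?_ hint]
    · have hsub : Ioi β ⊆ Function.support
          (fun x : ℝ => 1 / β * (x * Real.exp (-x ^ 2)) - Real.exp (-x ^ 2)) ∩ Ioi β := by
        intro x hx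
        refine ⟨?_, hx⟩
        have hxβ : β < x := hx
        have : Real.exp (-x ^ 2) < 1 / β * (x * Real.exp (-x ^ 2)) := by
          have h1 : 1 < x / β := (one_lt_div hβ).2 hxβ
          have := mul_lt_mul_of_pos_right h1 (Real.exp_pos (-x ^ 2))
          calc Real.exp (-x ^ 2) = 1 * Real.exp (-x ^ 2) := by ring
            _ < x / β * Real.exp (-x ^ 2) := this
            _ = 1 / β * (x * Real.exp (-x ^ 2)) := by ring
        exact sub_ne_zero_of_ne this.ne'
      calc (0 : ENNReal) < volume (Ioi β) := by simp [Real.volume_Ioi]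
        _ ≤ _ := measure_mono hsub
    · filter_upwards [ae_restrict_mem measurableSet_Ioi] with x hx
      have hxβ : β < x := hx
      have h1 : 1 ≤ x / β := le_of_lt ((one_lt_div hβ).2 hxβ)
      have := mul_le_mul_of_nonneg_right h1 (Real.exp_pos (-x ^ 2)).le
      have h2 : Real.exp (-x ^ 2) ≤ 1 / β * (x * Real.exp (-x ^ 2)) := by
        calc Real.exp (-x ^ 2) = 1 * Real.exp (-x ^ 2) := by ring
          _ ≤ x / β * Real.exp (-x ^ 2) := this
          _ = 1 / β * (x * Real.exp (-x ^ 2)) := by ring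
      simp only [Pi.zero_apply]
      linarith
  have hsplit : ∫ x in Ioi β, (1 / β * (x * Real.exp (-x ^ 2)) - Real.exp (-x ^ 2))
      = 1 / β * (Real.exp (-β ^ 2) / 2) - ∫ x in Ioi β, Real.exp (-x ^ 2) := by
    rw [integral_sub ((mul_gauss_integrable.const_mul (1 / β)).integrableOn)
      gauss_integrable.integrableOn, MeasureTheory.integral_const_mul, mul_gauss_Ioi]
  rw [hsplit] at hpos
  have heq2 : 1 / β * (Real.exp (-β ^ 2) / 2) = Real.exp (-β ^ 2) / (2 * β) := by
    rw [div_mul_eq_mul_div, one_mul, div_div]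
  rw [heq2] at hpos
  linarith

private lemma erfc_eq (β : ℝ) (hβ : 0 < β) :
    erfc β = (2 / Real.sqrt Real.pi) * ∫ x in Ioi β, Real.exp (-x ^ 2) := by
  have hsπ : (0:ℝ) < Real.sqrt Real.pi := Real.sqrt_pos.2 Real.pi_pos
  have hsplit : (∫ x in Ioc (0:ℝ) β, Real.exp (-x ^ 2)) + ∫ x in Ioi β, Real.exp (-x ^ 2)
      = Real.sqrt Real.pi / 2 := by
    rw [← gauss_Ioi_zero, ← setIntegral_union (Set.Ioc_disjoint_Ioi le_rfl) measurableSet_Ioi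
      gauss_integrable.integrableOn gauss_integrable.integrableOn,
      Set.Ioc_union_Ioi_eq_Ioi hβ.le]
  have herf : erf β = (2 / Real.sqrt Real.pi) * ∫ x in Ioc (0:ℝ) β, Real.exp (-x ^ 2) := by
    rw [erf, intervalIntegral.integral_of_le hβ.le]
  rw [erfc, herf]
  have h2 : (2 / Real.sqrt Real.pi) * (Real.sqrt Real.pi / 2) = 1 := by
    field_simp
  have := hsplit
  nlinarith [this, h2]

private lemma key (β : ℝ) (hβ : 0 < β) :
    0 < Real.sqrt Real.pi * β * Real.exp (β ^ 2) * erfc β ∧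
    Real.sqrt Real.pi * β * Real.exp (β ^ 2) * erfc β < 1 := by
  have hsπ : (0:ℝ) < Real.sqrt Real.pi := Real.sqrt_pos.2 Real.pi_pos
  set I := ∫ x in Ioi β, Real.exp (-x ^ 2) with hI
  have hIpos : 0 < I := gauss_Ioi_pos β
  have hIlt : I < Real.exp (-β ^ 2) / (2 * β) := gauss_Ioi_lt β hβ
  have heq : Real.sqrt Real.pi * β * Real.exp (β ^ 2) * erfc β
      = 2 * β * Real.exp (β ^ 2) * I := by
    rw [erfc_eq β hβ, ← hI]
    field_simp
  constructor
  · rw [heq]; positivity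
  · rw [heq]
    have h1 : 2 * β * Real.exp (β ^ 2) * I
        < 2 * β * Real.exp (β ^ 2) * (Real.exp (-β ^ 2) / (2 * β)) := by
      have hpos : (0:ℝ) < 2 * β * Real.exp (β ^ 2) := by positivity
      exact mul_lt_mul_of_pos_left hIlt hpos
    have h2 : 2 * β * Real.exp (β ^ 2) * (Real.exp (-β ^ 2) / (2 * β)) = 1 := by
      rw [mul_div_assoc']
      rw [show 2 * β * Real.exp (β ^ 2) * Real.exp (-β ^ 2)
        = 2 * β * (Real.exp (β ^ 2) * Real.exp (-β ^ 2)) by ring, ← Real.exp_add]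
      simp
      exact hβ.ne'
    linarith

/-- For every `β > 0`, `0 < √π β e^{β²} erfc(β) < 1`; consequently, with
`α = 4πλDa + μ` and `β = 4a²λ√(πD/α)`, the probability
`p_∞ = 1 − μ/α + √π β (μ/α) e^{β²} erfc(β)` satisfies `0 < p_∞ < 1`. -/
theorem pInfty_lt_one :
    (∀ β : ℝ, 0 < β →
      0 < Real.sqrt Real.pi * β * Real.exp (β ^ 2) * erfc β ∧
      Real.sqrt Real.pi * β * Real.exp (β ^ 2) * erfc β < 1) ∧
    ∀ a D lam mu : ℝ, 0 < a → 0 < D → 0 < lam → 0 < mu →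
      ∀ α β : ℝ, α = 4 * Real.pi * lam * D * a + mu →
        β = 4 * a ^ 2 * lam * Real.sqrt (Real.pi * D / α) →
        0 < 1 - mu / α + Real.sqrt Real.pi * β * (mu / α) * Real.exp (β ^ 2) * erfc β ∧
        1 - mu / α + Real.sqrt Real.pi * β * (mu / α) * Real.exp (β ^ 2) * erfc β < 1 := by
  refine ⟨key, ?_⟩
  intro a D lam mu ha hD hlam hmu α β hα hβ
  have hπ := Real.pi_pos
  have hαpos : 0 < α := by rw [hα]; positivity
  have hβpos : 0 < β := by
    rw [hβ]
    have : 0 < Real.sqrt (Real.pi * D / α) := Real.sqrt_pos.2 (by positivity)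
    positivity
  obtain ⟨hK0, hK1⟩ := key β hβpos
  set K := Real.sqrt Real.pi * β * Real.exp (β ^ 2) * erfc β with hK
  have hm0 : 0 < mu / α := by positivity
  have hm1 : mu / α < 1 := by
    rw [div_lt_one hαpos, hα]
    have : 0 < 4 * Real.pi * lam * D * a := by positivity
    linarith
  have hexpr : Real.sqrt Real.pi * β * (mu / α) * Real.exp (β ^ 2) * erfc β
      = (mu / α) * K := by rw [hK]; ring
  rw [hexpr]
  constructor <;> nlinarith
end
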